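/- arXiv:1801.04559 — 3 statements merged into one kernel-verified Lean document; each statement's English description precedes it below -/
import Mathlib

section
/- For every λ ∈ [λ*, 1) there exists a unique x ∈ (0, ρ] such that x·C'(x)/C(x) = 1/λ. -/
open Asymptotics Filter Nat

/-- `C(x) = ∑_{n} c n · xⁿ/n!`. -/
noncomputable def Cf (c : ℕ → ℝ) (x : ℝ) : ℝ := ∑' n : ℕ, c n * x ^ n / (n ! : ℝ)

/-- `C'(x) = ∑_{n} c (n+1) · xⁿ/n!`, the derivative of `C`. -/
noncomputable def Cd (c : ℕ → ℝ) (x : ℝ) : ℝ := ∑' n : ℕ, c (n + 1) * x ^ n / (n ! : ℝ)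

/-- `C''(x) = ∑_{n} c (n+2) · xⁿ/n!`, the second derivative of `C`. -/
noncomputable def Cdd (c : ℕ → ℝ) (x : ℝ) : ℝ := ∑' n : ℕ, c (n + 2) * x ^ n / (n ! : ℝ)

/-- `λ* = C(ρ)/(ρ·C'(ρ))`. -/
noncomputable def lamStar (c : ℕ → ℝ) (ρ : ℝ) : ℝ := Cf c ρ / (ρ * Cd c ρ)

/-- `a(n,N)`: the coefficient of `xⁿ` in the `N`-th power of the formal power series
`∑_{m} (c m/m!)·xᵐ`. -/
noncomputable def acoeff (c : ℕ → ℝ) (n N : ℕ) : ℝ :=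
  PowerSeries.coeff (R := ℝ) n ((PowerSeries.mk fun m : ℕ => c m / (m ! : ℝ)) ^ N)

/-- A strict Chebyshev-type correlation inequality for infinite sums. -/
lemma cheb_tsum {w f g : ℕ → ℝ} (hw : ∀ n, 0 ≤ w n)
    (hmv : ∀ n m, 0 ≤ (f n - f m) * (g n - g m))
    (hsw : Summable w) (hsf : Summable (fun n => f n * w n))
    (hsg : Summable (fun n => g n * w n)) (hsfg : Summable (fun n => f n * g n * w n))
    (i j : ℕ) (hwi : 0 < w i) (hwj : 0 < w j) (hij : 0 < (f i - f j) * (g i - g j)) :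
    (∑' n, f n * w n) * (∑' n, g n * w n) < (∑' n, f n * g n * w n) * (∑' n, w n) := by
  set A := ∑' n, w n with hA
  set B := ∑' n, g n * w n with hB
  set C := ∑' n, f n * w n with hC
  set D := ∑' n, f n * g n * w n with hD
  have inner_sum : ∀ n, Summable (fun m => w m * ((f n - f m) * (g n - g m))) := by
    intro n
    have e : (fun m => w m * ((f n - f m) * (g n - g m)))
        = fun m => f n * g n * w m - f n * (g m * w m) - g n * (f m * w m) + f m * g m * w m := by
      funext m; ring
    rw [e]
    exact (((hsw.mul_left (f n * g n)).sub (hsg.mul_left (f n))).sub (hsf.mul_left (g n))).add hsfg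
  have inner_val : ∀ n, ∑' m, w m * ((f n - f m) * (g n - g m))
      = f n * g n * A - f n * B - g n * C + D := by
    intro n
    have e : (fun m => w m * ((f n - f m) * (g n - g m)))
        = fun m => f n * g n * w m - f n * (g m * w m) - g n * (f m * w m) + f m * g m * w m := by
      funext m; ring
    rw [e, Summable.tsum_add (((hsw.mul_left (f n * g n)).sub (hsg.mul_left (f n))).sub
        (hsf.mul_left (g n))) hsfg,
      Summable.tsum_sub ((hsw.mul_left (f n * g n)).sub (hsg.mul_left (f n))) (hsf.mul_left (g n)),
      Summable.tsum_sub (hsw.mul_left (f n * g n)) (hsg.mul_left (f n)),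
      tsum_mul_left, tsum_mul_left, tsum_mul_left]
  set P : ℕ → ℝ := fun n => w n * (f n * g n * A - f n * B - g n * C + D) with hP
  have hP0 : ∀ n, 0 ≤ P n := by
    intro n
    refine mul_nonneg (hw n) ?_
    rw [← inner_val n]
    exact tsum_nonneg fun m => mul_nonneg (hw m) (hmv n m)
  have hPi : 0 < P i := by
    refine mul_pos hwi ?_
    rw [← inner_val i]
    exact Summable.tsum_pos (inner_sum i) (fun m => mul_nonneg (hw m) (hmv i m)) j (mul_pos hwj hij)
  have hPsum : Summable P := by
    have e : P = fun n => f n * g n * w n * A - f n * w n * B - g n * w n * C + w n * D := by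
      funext n; simp only [hP]; ring
    rw [e]
    exact (((hsfg.mul_right A).sub (hsf.mul_right B)).sub (hsg.mul_right C)).add (hsw.mul_right D)
  have hPval : ∑' n, P n = D * A - C * B - B * C + A * D := by
    have e : P = fun n => f n * g n * w n * A - f n * w n * B - g n * w n * C + w n * D := by
      funext n; simp only [hP]; ring
    rw [e, Summable.tsum_add (((hsfg.mul_right A).sub (hsf.mul_right B)).sub (hsg.mul_right C))
        (hsw.mul_right D),
      Summable.tsum_sub ((hsfg.mul_right A).sub (hsf.mul_right B)) (hsg.mul_right C),
      Summable.tsum_sub (hsfg.mul_right A) (hsf.mul_right B),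
      tsum_mul_right, tsum_mul_right, tsum_mul_right, tsum_mul_right]
  have hpos : 0 < ∑' n, P n := Summable.tsum_pos hPsum hP0 i hPi
  rw [hPval] at hpos
  nlinarith [hpos, mul_comm B C, mul_comm A D]

/-- Shift identity: `∑ n·(c n xⁿ/n!) = x·C'(x)`. -/
lemma shift_sum (c : ℕ → ℝ) (x : ℝ)
    (h' : Summable (fun n : ℕ => c (n + 1) * x ^ n / (n ! : ℝ))) :
    Summable (fun n : ℕ => (n : ℝ) * (c n * x ^ n / (n ! : ℝ))) ∧
      ∑' n : ℕ, (n : ℝ) * (c n * x ^ n / (n ! : ℝ)) = x * Cd c x := by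
  have e : ∀ m : ℕ, ((m + 1 : ℕ) : ℝ) * (c (m + 1) * x ^ (m + 1) / ((m + 1)! : ℝ))
      = x * (c (m + 1) * x ^ m / (m ! : ℝ)) := by
    intro m
    have h1 : ((m + 1)! : ℝ) = ((m : ℝ) + 1) * (m ! : ℝ) := by
      rw [Nat.factorial_succ]; push_cast; ring
    have h2 : (m ! : ℝ) ≠ 0 := by positivity
    have h3 : ((m : ℝ) + 1) ≠ 0 := by positivity
    rw [h1, pow_succ]
    push_cast
    field_simp
  have hFs : Summable (fun n : ℕ => (n : ℝ) * (c n * x ^ n / (n ! : ℝ))) := by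
    rw [← summable_nat_add_iff 1]
    exact (summable_congr e).mpr (h'.mul_left x)
  refine ⟨hFs, ?_⟩
  rw [Summable.tsum_eq_zero_add hFs]
  simp only [Nat.cast_zero, zero_mul, zero_add]
  rw [tsum_congr e, tsum_mul_left]
  rfl

/-- For every `λ ∈ [λ*, 1)` there is a unique `x ∈ (0, ρ]` with `x·C'(x)/C(x) = 1/λ`. -/
theorem unique_solution_of_mean_equation (c : ℕ → ℝ) (b ρ α : ℝ)
    (hc0 : c 0 = 0) (hcnn : ∀ n, 0 ≤ c n) (hc1 : 0 < c 1)
    (hb : 0 < b) (hρ : 0 < ρ) (hα : 1 < α)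
    (hasym : (fun n : ℕ => c n) ~[atTop]
      (fun n : ℕ => b * (n : ℝ) ^ (-(1 + α)) * ρ⁻¹ ^ n * (n ! : ℝ)))
    (hsum : ∀ x ∈ Set.Ioc (0 : ℝ) ρ, Summable (fun n : ℕ => c n * x ^ n / (n ! : ℝ)))
    (hsum' : ∀ x ∈ Set.Ioc (0 : ℝ) ρ, Summable (fun n : ℕ => c (n + 1) * x ^ n / (n ! : ℝ)))
    (lam : ℝ) (hlam : lam ∈ Set.Ico (lamStar c ρ) 1) :
    ∃! x : ℝ, x ∈ Set.Ioc (0 : ℝ) ρ ∧ x * Cd c x / Cf c x = 1 / lam := by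
  have hρmem : ρ ∈ Set.Ioc (0 : ℝ) ρ := ⟨hρ, le_refl ρ⟩
  -- positivity of Cf and Cd on (0, ρ]
  have hCf_lb : ∀ x ∈ Set.Ioc (0 : ℝ) ρ, c 1 * x ≤ Cf c x := by
    intro x hx
    have h1 : c 1 * x ^ 1 / (1! : ℝ) ≤ Cf c x :=
      Summable.le_tsum (hsum x hx) 1 fun j _ =>
        div_nonneg (mul_nonneg (hcnn j) (pow_nonneg hx.1.le j)) (Nat.cast_nonneg _)
    simpa [Nat.factorial] using h1
  have hCf_pos : ∀ x ∈ Set.Ioc (0 : ℝ) ρ, 0 < Cf c x := by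
    intro x hx
    have := hCf_lb x hx
    nlinarith [hx.1, hc1]
  have hCd_pos : ∀ x ∈ Set.Ioc (0 : ℝ) ρ, 0 < Cd c x := by
    intro x hx
    have h1 : c (0 + 1) * x ^ 0 / (0! : ℝ) ≤ Cd c x :=
      Summable.le_tsum (hsum' x hx) 0 fun j _ =>
        div_nonneg (mul_nonneg (hcnn (j + 1)) (pow_nonneg hx.1.le j)) (Nat.cast_nonneg _)
    simp only [pow_zero, Nat.factorial_zero, Nat.cast_one, mul_one, div_one] at h1
    linarith [hc1]
  have hlam_pos : 0 < lam := by
    have h1 : 0 < lamStar c ρ :=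
      div_pos (hCf_pos ρ hρmem) (mul_pos hρ (hCd_pos ρ hρmem))
    linarith [hlam.1]
  -- a large index with positive coefficient
  obtain ⟨N, hN2, hcN⟩ : ∃ N : ℕ, 2 ≤ N ∧ 0 < c N := by
    have hlo := hasym.isLittleO.def (by norm_num : (0:ℝ) < 1/2)
    obtain ⟨N, hN1, hN2⟩ := (hlo.and (eventually_ge_atTop 2)).exists
    refine ⟨N, hN2, ?_⟩
    have hNpos : (0 : ℝ) < N := by
      have : 0 < N := lt_of_lt_of_le (by norm_num) hN2
      exact_mod_cast this
    have hg_pos : 0 < b * (N : ℝ) ^ (-(1 + α)) * ρ⁻¹ ^ N * (N ! : ℝ) := by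
      refine mul_pos (mul_pos (mul_pos hb (Real.rpow_pos_of_pos hNpos _)) ?_) ?_
      · exact pow_pos (inv_pos.2 hρ) N
      · exact_mod_cast Nat.factorial_pos N
    simp only [Pi.sub_apply, Real.norm_eq_abs] at hN1
    rw [abs_of_pos hg_pos] at hN1
    have := abs_le.1 hN1
    linarith [this.1]
  -- key strict monotonicity inequality
  have key : ∀ x ∈ Set.Ioc (0 : ℝ) ρ, ∀ y ∈ Set.Ioc (0 : ℝ) ρ, x < y →
      (x * Cd c x) * Cf c y < (y * Cd c y) * Cf c x := by
    intro x hx y hy hxy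
    have hxpos := hx.1
    set t := y / x with ht
    have ht1 : 1 < t := (one_lt_div hxpos).2 hxy
    have hwnn : ∀ n : ℕ, 0 ≤ c n * x ^ n / (n ! : ℝ) := fun n =>
      div_nonneg (mul_nonneg (hcnn n) (pow_nonneg hxpos.le n)) (Nat.cast_nonneg _)
    have hgw : ∀ n : ℕ, t ^ n * (c n * x ^ n / (n ! : ℝ)) = c n * y ^ n / (n ! : ℝ) := by
      intro n
      have hyx : t ^ n * x ^ n = y ^ n := by
        rw [← mul_pow, div_mul_cancel₀ _ hxpos.ne']
      rw [← hyx]; ring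
    have hfgw : ∀ n : ℕ, (n : ℝ) * t ^ n * (c n * x ^ n / (n ! : ℝ))
        = (n : ℝ) * (c n * y ^ n / (n ! : ℝ)) := by
      intro n; rw [mul_assoc, hgw n]
    have hmv : ∀ n m : ℕ, 0 ≤ ((n : ℝ) - (m : ℝ)) * (t ^ n - t ^ m) := by
      intro n m
      rcases le_total n m with h | h
      · have h1 : (n : ℝ) - (m : ℝ) ≤ 0 := sub_nonpos.2 (by exact_mod_cast h)
        have h2 : t ^ n - t ^ m ≤ 0 := sub_nonpos.2 (pow_le_pow_right₀ ht1.le h)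
        calc (0:ℝ) ≤ (-((n : ℝ) - (m : ℝ))) * (-(t ^ n - t ^ m)) :=
              mul_nonneg (neg_nonneg.2 h1) (neg_nonneg.2 h2)
          _ = ((n : ℝ) - (m : ℝ)) * (t ^ n - t ^ m) := neg_mul_neg _ _
      · have h1 : (0:ℝ) ≤ (n : ℝ) - (m : ℝ) := sub_nonneg.2 (by exact_mod_cast h)
        have h2 : (0:ℝ) ≤ t ^ n - t ^ m := sub_nonneg.2 (pow_le_pow_right₀ ht1.le h)
        exact mul_nonneg h1 h2
    have hsw : Summable (fun n : ℕ => c n * x ^ n / (n ! : ℝ)) := hsum x hx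
    have hsf : Summable (fun n : ℕ => (n : ℝ) * (c n * x ^ n / (n ! : ℝ))) :=
      (shift_sum c x (hsum' x hx)).1
    have hsg : Summable (fun n : ℕ => t ^ n * (c n * x ^ n / (n ! : ℝ))) :=
      (summable_congr hgw).mpr (hsum y hy)
    have hsfg : Summable (fun n : ℕ => (n : ℝ) * t ^ n * (c n * x ^ n / (n ! : ℝ))) :=
      (summable_congr hfgw).mpr (shift_sum c y (hsum' y hy)).1
    have hw1 : 0 < c 1 * x ^ 1 / (1! : ℝ) := by
      simp only [pow_one, Nat.factorial_one, Nat.cast_one, div_one]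
      exact mul_pos hc1 hxpos
    have hwN : 0 < c N * x ^ N / (N ! : ℝ) := by
      refine div_pos (mul_pos hcN (pow_pos hxpos N)) ?_
      exact_mod_cast Nat.factorial_pos N
    have hij : 0 < (((1 : ℕ) : ℝ) - ((N : ℕ) : ℝ)) * (t ^ (1 : ℕ) - t ^ N) := by
      refine mul_pos_of_neg_of_neg ?_ ?_
      · have h5 : (1:ℝ) < (N:ℝ) := by
          have : 1 < N := lt_of_lt_of_le (by norm_num) hN2
          exact_mod_cast this
        push_cast
        linarith
      · have h6 : t ^ (1:ℕ) < t ^ N :=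
          pow_lt_pow_right₀ ht1 (lt_of_lt_of_le (by norm_num) hN2)
        linarith
    have hcheb := cheb_tsum (f := fun n : ℕ => (n : ℝ)) (g := fun n : ℕ => t ^ n)
      (w := fun n : ℕ => c n * x ^ n / (n ! : ℝ))
      hwnn hmv hsw hsf hsg hsfg 1 N hw1 hwN hij
    rw [(shift_sum c x (hsum' x hx)).2, tsum_congr hgw, tsum_congr hfgw,
      (shift_sum c y (hsum' y hy)).2] at hcheb
    exact hcheb
  -- solutions satisfy a linear relation
  have sol_lin : ∀ u ∈ Set.Ioc (0 : ℝ) ρ, u * Cd c u / Cf c u = 1 / lam →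
      lam * (u * Cd c u) = Cf c u := by
    intro u hu he
    have h := (div_eq_div_iff (hCf_pos u hu).ne' hlam_pos.ne').mp he
    linarith [h]
  -- continuity of Cf and Cd on [0, ρ]
  have contCf : ContinuousOn (Cf c) (Set.Icc 0 ρ) := by
    refine continuousOn_tsum
      (fun i => ((continuous_const.mul (continuous_pow i)).div_const _).continuousOn)
      (hsum ρ hρmem) ?_
    intro n x hx
    rw [Real.norm_eq_abs, abs_of_nonneg
      (div_nonneg (mul_nonneg (hcnn n) (pow_nonneg hx.1 n)) (Nat.cast_nonneg _))]
    gcongr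
    exacts [hcnn n, hx.1, hx.2]
  have contCd : ContinuousOn (Cd c) (Set.Icc 0 ρ) := by
    refine continuousOn_tsum
      (fun i => ((continuous_const.mul (continuous_pow i)).div_const _).continuousOn)
      (hsum' ρ hρmem) ?_
    intro n x hx
    rw [Real.norm_eq_abs, abs_of_nonneg
      (div_nonneg (mul_nonneg (hcnn (n + 1)) (pow_nonneg hx.1 n)) (Nat.cast_nonneg _))]
    gcongr
    exacts [hcnn (n + 1), hx.1, hx.2]
  have hCd0 : Cd c 0 = c 1 := by
    have h0 : ∀ n : ℕ, n ≠ 0 → c (n + 1) * (0:ℝ) ^ n / (n ! : ℝ) = 0 := by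
      intro n hn; simp [zero_pow hn]
    rw [Cd, tsum_eq_single 0 h0]
    simp
  -- find x₀ with lam * Cd x₀ < c 1
  have htend : Tendsto (fun x => lam * Cd c x) (nhdsWithin 0 (Set.Ioc (0:ℝ) ρ))
      (nhds (lam * c 1)) := by
    have h1 : ContinuousWithinAt (Cd c) (Set.Icc 0 ρ) 0 := contCd 0 ⟨le_refl 0, hρ.le⟩
    have h2 : Tendsto (Cd c) (nhdsWithin 0 (Set.Icc (0:ℝ) ρ)) (nhds (c 1)) := by
      rw [← hCd0]; exact h1
    exact (tendsto_const_nhds.mul h2).mono_left (nhdsWithin_mono _ Set.Ioc_subset_Icc_self)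
  have hltc1 : lam * c 1 < c 1 := by nlinarith [hlam.2, hc1]
  have hev : ∀ᶠ x in nhdsWithin 0 (Set.Ioc (0:ℝ) ρ), lam * Cd c x < c 1 :=
    htend.eventually_lt_const hltc1
  have hne : (nhdsWithin 0 (Set.Ioc (0:ℝ) ρ)).NeBot := by
    rw [nhdsWithin_Ioc_eq_nhdsGT hρ]; infer_instance
  obtain ⟨x₀, hx₀lt, hx₀mem⟩ := (hev.and eventually_mem_nhdsWithin).exists
  -- intermediate value theorem for H
  have contH : ContinuousOn (fun x => lam * (x * Cd c x) - Cf c x) (Set.Icc x₀ ρ) := by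
    have h1 : ContinuousOn (fun x => lam * (x * Cd c x) - Cf c x) (Set.Icc 0 ρ) :=
      (continuousOn_const.mul (continuousOn_id.mul contCd)).sub contCf
    exact h1.mono (Set.Icc_subset_Icc hx₀mem.1.le le_rfl)
  have hHx₀ : lam * (x₀ * Cd c x₀) - Cf c x₀ < 0 := by
    have h1 : lam * (x₀ * Cd c x₀) < c 1 * x₀ := by
      calc lam * (x₀ * Cd c x₀) = (lam * Cd c x₀) * x₀ := by ring
        _ < c 1 * x₀ := mul_lt_mul_of_pos_right hx₀lt hx₀mem.1
    linarith [hCf_lb x₀ hx₀mem]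
  have hHρ : 0 ≤ lam * (ρ * Cd c ρ) - Cf c ρ := by
    have h2 : Cf c ρ ≤ lam * (ρ * Cd c ρ) := by
      have h1 : lamStar c ρ ≤ lam := hlam.1
      rw [lamStar] at h1
      exact (div_le_iff₀ (mul_pos hρ (hCd_pos ρ hρmem))).mp h1
    linarith
  obtain ⟨x, hxmem, hHx⟩ := intermediate_value_Icc hx₀mem.2 contH ⟨hHx₀.le, hHρ⟩
  have hxIoc : x ∈ Set.Ioc (0:ℝ) ρ := ⟨lt_of_lt_of_le hx₀mem.1 hxmem.1, hxmem.2⟩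
  have heq : x * Cd c x / Cf c x = 1 / lam := by
    rw [div_eq_div_iff (hCf_pos x hxIoc).ne' hlam_pos.ne']
    have hHx' : lam * (x * Cd c x) - Cf c x = 0 := hHx
    linear_combination hHx'
  refine ⟨x, ⟨hxIoc, heq⟩, ?_⟩
  rintro y ⟨hymem, hyeq⟩
  by_contra hne'
  have e1 := sol_lin x hxIoc heq
  have e2 := sol_lin y hymem hyeq
  rcases lt_or_gt_of_ne hne' with h | h
  · have hk := key y hymem x hxIoc h
    have h2 : lam * (y * Cd c y * Cf c x) < lam * (x * Cd c x * Cf c y) :=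
      mul_lt_mul_of_pos_left hk hlam_pos
    have h3 : Cf c y * Cf c x < Cf c x * Cf c y := by
      calc Cf c y * Cf c x = lam * (y * Cd c y * Cf c x) := by rw [← e2]; ring
        _ < lam * (x * Cd c x * Cf c y) := h2
        _ = Cf c x * Cf c y := by rw [← e1]; ring
    rw [mul_comm (Cf c y) (Cf c x)] at h3
    exact lt_irrefl _ h3
  · have hk := key x hxIoc y hymem h
    have h2 : lam * (x * Cd c x * Cf c y) < lam * (y * Cd c y * Cf c x) :=
      mul_lt_mul_of_pos_left hk hlam_pos
    have h3 : Cf c x * Cf c y < Cf c y * Cf c x := by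
      calc Cf c x * Cf c y = lam * (x * Cd c x * Cf c y) := by rw [← e1]; ring
        _ < lam * (y * Cd c y * Cf c x) := h2
        _ = Cf c y * Cf c x := by rw [← e2]; ring
    rw [mul_comm (Cf c x) (Cf c y)] at h3
    exact lt_irrefl _ h3
end

section
/- Suppose c : ℕ → ℝ is nonnegative and c n is asymptotically equivalent to b·n^{-(1+α)}·ρ^{-n}·n! as n → ∞, for constants b > 0, ρ > 0 and α > 1. Then the tail sums satisfy: ∑_{m > n} (c m)·ρᵐ/m! is asymptotically equivalent to (b/α)·n^{-α} as n → ∞. -/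
open Asymptotics Filter Nat intervalIntegral

lemma integral_eq (α : ℝ) (hα : 1 < α) (m : ℕ) (hm : 1 ≤ m) :
    ∫ x in (m:ℝ)..(m+1:ℝ), x ^ (-(1+α)) =
      ((m:ℝ) ^ (-α) - ((m:ℝ)+1) ^ (-α)) / α := by
  rw [integral_rpow (Or.inr ⟨by nlinarith, by
    intro h
    rw [Set.uIcc_of_le (by linarith)] at h
    have : (1:ℝ) ≤ (m:ℝ) := by exact_mod_cast hm
    exact absurd h.1 (by linarith)⟩)]
  have h1 : -(1+α) + 1 = -α := by ring
  rw [h1, add_comm (m:ℝ) 1, div_eq_div_iff (by intro h; exact absurd (neg_eq_zero.1 h) (by positivity)) (by positivity : (α:ℝ) ≠ 0)]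
  ring

lemma step_bounds (α : ℝ) (hα : 1 < α) (m : ℕ) (hm : 1 ≤ m) :
    ((m:ℝ)+1) ^ (-(1+α)) ≤ ((m:ℝ) ^ (-α) - ((m:ℝ)+1) ^ (-α)) / α ∧
      ((m:ℝ) ^ (-α) - ((m:ℝ)+1) ^ (-α)) / α ≤ (m:ℝ) ^ (-(1+α)) := by
  have hm1 : (1:ℝ) ≤ (m:ℝ) := by exact_mod_cast hm
  have hle : (m:ℝ) ≤ (m:ℝ)+1 := by linarith
  have hint : IntervalIntegrable (fun x : ℝ => x ^ (-(1+α))) MeasureTheory.volume (m:ℝ) ((m:ℝ)+1) := by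
    apply ContinuousOn.intervalIntegrable
    apply ContinuousOn.rpow_const continuousOn_id
    intro x hx
    rw [Set.uIcc_of_le hle] at hx
    exact Or.inl (by dsimp; linarith [hx.1])
  have hmono : ∀ x ∈ Set.Icc (m:ℝ) ((m:ℝ)+1), ((m:ℝ)+1) ^ (-(1+α)) ≤ x ^ (-(1+α)) ∧ x ^ (-(1+α)) ≤ (m:ℝ) ^ (-(1+α)) := by
    intro x hx
    constructor
    · exact Real.rpow_le_rpow_of_nonpos (by linarith [hx.1]) hx.2 (by linarith)
    · exact Real.rpow_le_rpow_of_nonpos (by linarith) hx.1 (by linarith)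
  have hc : ∀ c : ℝ, IntervalIntegrable (fun _ : ℝ => c) MeasureTheory.volume (m:ℝ) ((m:ℝ)+1) :=
    fun c => intervalIntegrable_const
  constructor
  · have := intervalIntegral.integral_mono_on hle (hc (((m:ℝ)+1) ^ (-(1+α)))) hint
      (fun x hx => (hmono x hx).1)
    rw [intervalIntegral.integral_const, integral_eq α hα m hm] at this
    simpa using this
  · have := intervalIntegral.integral_mono_on hle hint (hc ((m:ℝ) ^ (-(1+α))))
      (fun x hx => (hmono x hx).2)
    rw [intervalIntegral.integral_const, integral_eq α hα m hm] at this
    simpa using this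

lemma F_tendsto (α : ℝ) (hα : 1 < α) :
    Tendsto (fun j : ℕ => (j:ℝ) ^ (-α) / α) atTop (nhds 0) := by
  have h1 : Tendsto (fun x : ℝ => x ^ (-α)) atTop (nhds 0) :=
    tendsto_rpow_neg_atTop (by linarith)
  have h2 : Tendsto (fun j : ℕ => ((j:ℝ)) ^ (-α)) atTop (nhds 0) :=
    h1.comp tendsto_natCast_atTop_atTop
  simpa using h2.div_const α

lemma telescope_hasSum (α : ℝ) (hα : 1 < α) (j0 : ℕ) (hj0 : 1 ≤ j0) :
    HasSum (fun k : ℕ => ((j0+k:ℕ):ℝ) ^ (-α) / α - ((j0+k+1:ℕ):ℝ) ^ (-α) / α)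
      (((j0:ℕ):ℝ) ^ (-α) / α) := by
  set F : ℕ → ℝ := fun j => (j:ℝ) ^ (-α) / α with hF
  have hnonneg : ∀ k : ℕ, 0 ≤ F (j0+k) - F (j0+k+1) := by
    intro k
    have h1 : (1:ℝ) ≤ ((j0+k:ℕ):ℝ) := by exact_mod_cast Nat.le_add_right_of_le hj0
    have : ((j0+k+1:ℕ):ℝ) ^ (-α) ≤ ((j0+k:ℕ):ℝ) ^ (-α) := by
      apply Real.rpow_le_rpow_of_nonpos (by linarith) (by push_cast; linarith) (by linarith)
    simp only [hF]
    have hα0 : (0:ℝ) < α := by linarith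
    have := sub_nonneg.2 this
    exact div_nonneg this (le_of_lt hα0) |>.trans_eq (by ring)
  rw [hasSum_iff_tendsto_nat_of_nonneg hnonneg]
  have key : ∀ K : ℕ, ∑ k ∈ Finset.range K, (F (j0+k) - F (j0+k+1)) = F j0 - F (j0+K) := by
    intro K
    have := Finset.sum_range_sub' (fun k => F (j0+k)) K
    simpa [Nat.add_assoc] using this
  simp only [key]
  have : Tendsto (fun K : ℕ => F (j0 + K)) atTop (nhds 0) :=
    ((F_tendsto α hα).comp (tendsto_add_atTop_nat j0)).congr (fun K => by simp [hF, Function.comp, Nat.add_comm])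
  simpa using (tendsto_const_nhds.sub this)

lemma f_summable (α : ℝ) (hα : 1 < α) :
    Summable (fun m : ℕ => (m:ℝ) ^ (-(1+α))) :=
  Real.summable_nat_rpow.2 (by linarith)

lemma S_lower (α : ℝ) (hα : 1 < α) (n : ℕ) :
    ((n+1:ℕ):ℝ) ^ (-α) / α ≤ ∑' k : ℕ, ((n+1+k:ℕ):ℝ) ^ (-(1+α)) := by
  have hsum : Summable (fun k : ℕ => ((n+1+k:ℕ):ℝ) ^ (-(1+α))) := by
    have := (summable_nat_add_iff (f := fun m : ℕ => (m:ℝ) ^ (-(1+α))) (n+1)).2 (f_summable α hα)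
    exact this.congr (fun k => by rw [Nat.add_comm])
  have htel := telescope_hasSum α hα (n+1) (Nat.le_add_left 1 n)
  rw [← htel.tsum_eq]
  apply Summable.tsum_le_tsum _ htel.summable hsum
  intro k
  have hb := (step_bounds α hα (n+1+k) (Nat.le_add_right_of_le (Nat.le_add_left 1 n))).2
  calc ((n+1+k:ℕ):ℝ) ^ (-α) / α - ((n+1+k+1:ℕ):ℝ) ^ (-α) / α
      = (((n+1+k:ℕ):ℝ) ^ (-α) - (((n+1+k:ℕ):ℝ)+1) ^ (-α)) / α := by push_cast; ring_nf
    _ ≤ ((n+1+k:ℕ):ℝ) ^ (-(1+α)) := hb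

lemma S_upper (α : ℝ) (hα : 1 < α) (n : ℕ) :
    ∑' k : ℕ, ((n+1+k:ℕ):ℝ) ^ (-(1+α)) ≤ ((n+1:ℕ):ℝ) ^ (-α) / α + ((n+1:ℕ):ℝ) ^ (-(1+α)) := by
  have hsum : Summable (fun k : ℕ => ((n+1+k:ℕ):ℝ) ^ (-(1+α))) := by
    have := (summable_nat_add_iff (f := fun m : ℕ => (m:ℝ) ^ (-(1+α))) (n+1)).2 (f_summable α hα)
    exact this.congr (fun k => by rw [Nat.add_comm])
  have htel := telescope_hasSum α hα (n+1) (Nat.le_add_left 1 n)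
  rw [Summable.tsum_eq_zero_add hsum]
  have h2 : ∑' k : ℕ, ((n+1+(k+1):ℕ):ℝ) ^ (-(1+α)) ≤ ((n+1:ℕ):ℝ) ^ (-α) / α := by
    rw [← htel.tsum_eq]
    apply Summable.tsum_le_tsum _ ((summable_nat_add_iff 1).2 hsum |>.congr (fun k => by norm_num [Nat.add_comm, Nat.add_assoc])) htel.summable
    intro k
    have hb := (step_bounds α hα (n+1+k) (Nat.le_add_right_of_le (Nat.le_add_left 1 n))).1
    calc ((n+1+(k+1):ℕ):ℝ) ^ (-(1+α)) = (((n+1+k:ℕ):ℝ)+1) ^ (-(1+α)) := by push_cast; ring_nf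
      _ ≤ (((n+1+k:ℕ):ℝ) ^ (-α) - (((n+1+k:ℕ):ℝ)+1) ^ (-α)) / α := hb
      _ = ((n+1+k:ℕ):ℝ) ^ (-α) / α - ((n+1+k+1:ℕ):ℝ) ^ (-α) / α := by push_cast; ring_nf
  have h0 : ((n+1+0:ℕ):ℝ) ^ (-(1+α)) = ((n+1:ℕ):ℝ) ^ (-(1+α)) := by norm_num
  linarith [h2, h0.le]

lemma L_tendsto (α : ℝ) (hα : 1 < α) :
    Tendsto (fun n : ℕ => ((n+1:ℕ):ℝ) ^ (-α) / (n:ℝ) ^ (-α)) atTop (nhds 1) := by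
  have h0 : Tendsto (fun n : ℕ => (((n:ℝ)+1)/(n:ℝ))) atTop (nhds 1) := by
    have h1 : Tendsto (fun n : ℕ => 1 + (n:ℝ)⁻¹) atTop (nhds 1) := by
      simpa using tendsto_const_nhds.add (tendsto_inv_atTop_nhds_zero_nat (𝕜 := ℝ))
    apply h1.congr'
    filter_upwards [eventually_ge_atTop 1] with n hn
    have : (n:ℝ) ≠ 0 := by positivity
    field_simp
  have h2 : Tendsto (fun n : ℕ => (((n:ℝ)+1)/(n:ℝ)) ^ (-α)) atTop (nhds 1) := by
    have := h0.rpow_const (p := -α) (Or.inl one_ne_zero)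
    simpa using this
  apply h2.congr'
  filter_upwards [eventually_ge_atTop 1] with n hn
  have hn0 : (0:ℝ) < (n:ℝ) := by exact_mod_cast hn
  rw [Real.div_rpow (by linarith) hn0.le]
  push_cast
  ring_nf

lemma ratio_tendsto (α : ℝ) (hα : 1 < α) :
    Tendsto (fun n : ℕ => (∑' k : ℕ, ((n+1+k:ℕ):ℝ) ^ (-(1+α))) / ((n:ℝ) ^ (-α) / α))
      atTop (nhds 1) := by
  have hL := L_tendsto α hα
  have hE : Tendsto (fun n : ℕ => ((n+1:ℕ):ℝ) ^ (-α) / (n:ℝ) ^ (-α) + α * (n:ℝ)⁻¹)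
      atTop (nhds 1) := by
    simpa using hL.add ((tendsto_inv_atTop_nhds_zero_nat (𝕜 := ℝ)).const_mul α)
  apply tendsto_of_tendsto_of_tendsto_of_le_of_le' hL hE
  · filter_upwards [eventually_ge_atTop 1] with n hn
    have hn0 : (0:ℝ) < (n:ℝ) := by exact_mod_cast hn
    have hv : (0:ℝ) < (n:ℝ) ^ (-α) / α := by
      apply div_pos (Real.rpow_pos_of_pos hn0 _) (by linarith)
    rw [div_le_div_iff₀ (by positivity) hv]
    have := S_lower α hα n
    calc ((n+1:ℕ):ℝ) ^ (-α) * ((n:ℝ) ^ (-α) / α)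
        = (((n+1:ℕ):ℝ) ^ (-α) / α) * (n:ℝ) ^ (-α) := by ring
      _ ≤ (∑' k : ℕ, ((n+1+k:ℕ):ℝ) ^ (-(1+α))) * (n:ℝ) ^ (-α) := by
          apply mul_le_mul_of_nonneg_right this (Real.rpow_pos_of_pos hn0 _).le
  · filter_upwards [eventually_ge_atTop 1] with n hn
    have hn0 : (0:ℝ) < (n:ℝ) := by exact_mod_cast hn
    have hv : (0:ℝ) < (n:ℝ) ^ (-α) / α := by
      apply div_pos (Real.rpow_pos_of_pos hn0 _) (by linarith)
    rw [div_le_iff₀ hv]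
    have hS := S_upper α hα n
    have hf1 : ((n+1:ℕ):ℝ) ^ (-(1+α)) ≤ (n:ℝ) ^ (-(1+α)) := by
      apply Real.rpow_le_rpow_of_nonpos hn0 (by push_cast; linarith) (by linarith)
    have hsplit : (n:ℝ) ^ (-(1+α)) = (n:ℝ) ^ (-α) * (n:ℝ)⁻¹ := by
      rw [← Real.rpow_neg_one (n:ℝ), ← Real.rpow_add hn0]
      ring_nf
    calc (∑' k : ℕ, ((n+1+k:ℕ):ℝ) ^ (-(1+α)))
        ≤ ((n+1:ℕ):ℝ) ^ (-α) / α + ((n+1:ℕ):ℝ) ^ (-(1+α)) := hS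
      _ ≤ ((n+1:ℕ):ℝ) ^ (-α) / α + (n:ℝ) ^ (-α) * (n:ℝ)⁻¹ := by
          rw [hsplit] at hf1; linarith
      _ = (((n+1:ℕ):ℝ) ^ (-α) / (n:ℝ) ^ (-α) + α * (n:ℝ)⁻¹) * ((n:ℝ) ^ (-α) / α) := by
          have hr : (n:ℝ) ^ (-α) ≠ 0 := (Real.rpow_pos_of_pos hn0 _).ne'
          have hα0 : (α:ℝ) ≠ 0 := by linarith
          field_simp

lemma ind_eq (f : ℕ → ℝ) (n : ℕ) :
    (fun m => if n < m then f m else 0) = Set.indicator {m | n < m} f := by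
  funext m; simp [Set.indicator_apply]

lemma tail_equiv (a d : ℕ → ℝ) (hd : Summable d) (hdnn : ∀ m, 0 ≤ d m)
    (h : a ~[atTop] d) :
    (fun n : ℕ => ∑' m : ℕ, if n < m then a m else 0) ~[atTop]
      (fun n : ℕ => ∑' m : ℕ, if n < m then d m else 0) := by
  have ha : Summable a := summable_of_isEquivalent_nat hd h
  rw [IsEquivalent, isLittleO_iff]
  intro ε hε
  have hsm := (isLittleO_iff.1 h.isLittleO) hε
  rw [eventually_atTop] at hsm
  obtain ⟨N, hN⟩ := hsm
  rw [eventually_atTop]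
  refine ⟨N, fun n hn => ?_⟩
  have hA : Summable (fun m => if n < m then a m else 0) := by
    rw [ind_eq]; exact ha.indicator _
  have hD : Summable (fun m => if n < m then d m else 0) := by
    rw [ind_eq]; exact hd.indicator _
  have hTd0 : 0 ≤ ∑' m : ℕ, if n < m then d m else 0 :=
    tsum_nonneg (fun m => by split <;> simp [hdnn])
  have hsub : Summable (fun m => (if n < m then a m else 0) - (if n < m then d m else 0)) :=
    hA.sub hD
  have key : ∀ m : ℕ, |(if n < m then a m else 0) - (if n < m then d m else 0)|
      ≤ ε * (if n < m then d m else 0) := by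
    intro m
    by_cases hm : n < m
    · simp only [if_pos hm]
      have := hN m (le_trans hn (le_of_lt hm))
      rw [Real.norm_eq_abs, Real.norm_eq_abs, abs_of_nonneg (hdnn m)] at this
      exact this
    · simp [if_neg hm]
  calc ‖(∑' m : ℕ, if n < m then a m else 0) - (∑' m : ℕ, if n < m then d m else 0)‖
      = |∑' m : ℕ, ((if n < m then a m else 0) - (if n < m then d m else 0))| := by
        rw [Summable.tsum_sub hA hD, Real.norm_eq_abs]
    _ ≤ ∑' m : ℕ, |(if n < m then a m else 0) - (if n < m then d m else 0)| := by
        have := norm_tsum_le_tsum_norm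
          (f := fun m => (if n < m then a m else 0) - (if n < m then d m else 0))
          (by simpa [Real.norm_eq_abs] using hsub.abs)
        simpa [Real.norm_eq_abs] using this
    _ ≤ ∑' m : ℕ, ε * (if n < m then d m else 0) :=
        Summable.tsum_le_tsum key hsub.abs (hD.mul_left ε)
    _ = ε * ∑' m : ℕ, (if n < m then d m else 0) := tsum_mul_left
    _ ≤ ε * ‖∑' m : ℕ, (if n < m then d m else 0)‖ := by
        rw [Real.norm_eq_abs, abs_of_nonneg hTd0]

lemma tsum_shift (f : ℕ → ℝ) (n : ℕ) :
    (∑' m : ℕ, if n < m then f m else 0) = ∑' k : ℕ, f (n+1+k) := by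
  have hi : Function.Injective (fun k : ℕ => n+1+k) := add_right_injective (n+1)
  have hs : Function.support (fun m => if n < m then f m else 0) ⊆
      Set.range (fun k : ℕ => n+1+k) := by
    intro m hm
    simp only [Function.mem_support] at hm
    by_cases h : n < m
    · exact ⟨m - (n+1), show n+1+(m-(n+1)) = m by omega⟩
    · simp [if_neg h] at hm
  have := hi.tsum_eq hs
  rw [← this]
  apply tsum_congr
  intro k
  rw [if_pos (by omega)]


/-- If `c n ∼ b·n^{-(1+α)}·ρ^{-n}·n!` with `b, ρ > 0` and `α > 1`, then the tail sums
satisfy `∑_{m > n} c m · ρᵐ/m! ∼ (b/α)·n^{-α}` as `n → ∞`. -/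
theorem tail_sum_asymptotics (c : ℕ → ℝ) (b ρ α : ℝ)
    (hcnn : ∀ n, 0 ≤ c n) (hb : 0 < b) (hρ : 0 < ρ) (hα : 1 < α)
    (hasym : (fun n : ℕ => c n) ~[atTop]
      (fun n : ℕ => b * (n : ℝ) ^ (-(1 + α)) * ρ⁻¹ ^ n * (n ! : ℝ))) :
    (fun n : ℕ => ∑' m : ℕ, if n < m then c m * ρ ^ m / (m ! : ℝ) else 0)
      ~[atTop]
    (fun n : ℕ => b / α * (n : ℝ) ^ (-α)) := by

  set d : ℕ → ℝ := fun m => b * (m:ℝ) ^ (-(1+α)) with hd_def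
  have hρ0 : ρ ≠ 0 := ne_of_gt hρ
  -- Step A
  have hstepA : (fun m : ℕ => c m * ρ ^ m / (m ! : ℝ)) ~[atTop] d := by
    have h1 := hasym.mul (IsEquivalent.refl (u := fun m : ℕ => ρ ^ m / (m ! : ℝ)))
    have e1 : (fun m : ℕ => c m) * (fun m : ℕ => ρ ^ m / (m ! : ℝ))
        = fun m : ℕ => c m * ρ ^ m / (m ! : ℝ) := by
      funext m; simp [mul_div_assoc]
    have e2 : (fun m : ℕ => b * (m:ℝ) ^ (-(1+α)) * ρ⁻¹ ^ m * (m ! : ℝ))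
        * (fun m : ℕ => ρ ^ m / (m ! : ℝ)) = d := by
      funext m
      have hf : (m ! : ℝ) ≠ 0 := Nat.cast_ne_zero.2 m.factorial_ne_zero
      have hp : ρ ^ m ≠ 0 := pow_ne_zero m hρ0
      simp only [Pi.mul_apply, hd_def, inv_pow]
      field_simp
    rwa [e1, e2] at h1
  have hdnn : ∀ m, 0 ≤ d m := fun m => mul_nonneg hb.le (Real.rpow_nonneg (Nat.cast_nonneg m) _)
  have hdsum : Summable d := (f_summable α hα).mul_left b
  have hTaTd := tail_equiv _ d hdsum hdnn hstepA
  -- value of tail sums of d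
  have hTd_eq : (fun n : ℕ => ∑' m : ℕ, if n < m then d m else 0)
      = fun n : ℕ => b * ∑' k : ℕ, ((n+1+k:ℕ):ℝ) ^ (-(1+α)) := by
    funext n
    rw [tsum_shift d n]
    simp only [hd_def]
    exact tsum_mul_left
  -- S equiv
  have hSequiv : (fun n : ℕ => ∑' k : ℕ, ((n+1+k:ℕ):ℝ) ^ (-(1+α))) ~[atTop]
      (fun n : ℕ => (n:ℝ) ^ (-α) / α) := by
    rw [isEquivalent_iff_tendsto_one ?_]
    · exact (ratio_tendsto α hα).congr (fun n => rfl)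
    · filter_upwards [eventually_ge_atTop 1] with n hn
      have hn0 : (0:ℝ) < (n:ℝ) := by exact_mod_cast hn
      exact div_ne_zero (Real.rpow_pos_of_pos hn0 _).ne' (by linarith)
  have hTd_equiv : (fun n : ℕ => ∑' m : ℕ, if n < m then d m else 0) ~[atTop]
      (fun n : ℕ => b / α * (n:ℝ) ^ (-α)) := by
    have h2 := (IsEquivalent.refl (u := fun _ : ℕ => b)).mul hSequiv
    have e3 : (fun _ : ℕ => b) * (fun n : ℕ => ∑' k : ℕ, ((n+1+k:ℕ):ℝ) ^ (-(1+α)))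
        = fun n : ℕ => ∑' m : ℕ, if n < m then d m else 0 := by
      rw [hTd_eq]; rfl
    have e4 : (fun _ : ℕ => b) * (fun n : ℕ => (n:ℝ) ^ (-α) / α)
        = fun n : ℕ => b / α * (n:ℝ) ^ (-α) := by
      funext n; simp [Pi.mul_apply]; ring
    rwa [e3, e4] at h2
  exact hTaTd.trans hTd_equiv
end

section
/- Let B and C be formal power series over ℝ with zero constant term, and assume additionally that the linear coefficient of B is zero. Write D := X·C' (so D has zero constant term) and suppose the block-decomposition equation X·C' = X·exp(B' ∘ D) holds, where B' denotes the formal derivative of B, ∘ denotes composition of formal power series, and exp is the formal exponential. Then C = D − D·(B' ∘ D) + (B ∘ D) as formal power series. -/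
open PowerSeries

/-- Composition `f ∘ g` of formal power series (meaningful whenever the inner series `g`
has zero constant term, in which case `coeff n (g^k) = 0` for `k > n`). -/
noncomputable def psComp (f g : PowerSeries ℝ) : PowerSeries ℝ :=
  PowerSeries.mk fun n => ∑ k ∈ Finset.range (n + 1),
    PowerSeries.coeff k f * PowerSeries.coeff n (g ^ k)

/-- Formal exponential `exp(g)` of a power series `g` with zero constant term,
defined as the composition of the exponential series with `g`. -/
noncomputable def psExp (g : PowerSeries ℝ) : PowerSeries ℝ :=
  psComp (PowerSeries.exp ℝ) g

lemma coeff_psComp (f g : PowerSeries ℝ) (n : ℕ) :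
    coeff n (psComp f g) = ∑ k ∈ Finset.range (n + 1),
      coeff k f * coeff n (g ^ k) := by
  simp [psComp]

lemma coeff_pow_eq_zero {g : PowerSeries ℝ} (hg : constantCoeff g = 0)
    {n k : ℕ} (h : n < k) : coeff n (g ^ k) = 0 := by
  have hd : (X : PowerSeries ℝ) ^ k ∣ g ^ k :=
    pow_dvd_pow_of_dvd (X_dvd_iff.mpr hg) k
  exact (X_pow_dvd_iff.mp hd) n h

lemma coeff_psComp' {g : PowerSeries ℝ} (hg : constantCoeff g = 0)
    (f : PowerSeries ℝ) {n m : ℕ} (h : n < m) :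
    coeff n (psComp f g) = ∑ k ∈ Finset.range m,
      coeff k f * coeff n (g ^ k) := by
  rw [coeff_psComp]
  apply Finset.sum_subset (Finset.range_subset_range.mpr (by omega))
  intro k hk hk'
  rw [coeff_pow_eq_zero hg (by simp at hk'; omega), mul_zero]

lemma constantCoeff_psComp (f g : PowerSeries ℝ) :
    constantCoeff (psComp f g) = constantCoeff f := by
  rw [← coeff_zero_eq_constantCoeff_apply, coeff_psComp]
  simp

lemma derivative_psComp {g : PowerSeries ℝ} (hg : constantCoeff g = 0)
    (f : PowerSeries ℝ) :
    derivative ℝ (psComp f g) = psComp (derivative ℝ f) g * derivative ℝ g := by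
  ext n
  rw [coeff_derivative, coeff_psComp' hg f (show n + 1 < n + 2 by omega), coeff_mul]
  have hR : ∀ p ∈ Finset.HasAntidiagonal.antidiagonal n,
      coeff p.1 (psComp (derivative ℝ f) g) * coeff p.2 (derivative ℝ g)
        = ∑ k ∈ Finset.range (n + 1), coeff k (derivative ℝ f) *
            (coeff p.1 (g ^ k) * coeff p.2 (derivative ℝ g)) := by
    intro p hp
    rw [coeff_psComp' hg _ (show p.1 < n + 1 by
      have := Finset.HasAntidiagonal.antidiagonal.fst_le hp; omega), Finset.sum_mul]
    simp [mul_assoc]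
  rw [Finset.sum_congr rfl hR, Finset.sum_comm, Finset.sum_mul, Finset.sum_range_succ']
  have h0 : coeff 0 f * coeff (n + 1) (g ^ 0) * (↑n + 1) = 0 := by
    simp [coeff_pow_eq_zero (g := g)]  -- coeff (n+1) 1 = 0
  rw [h0, add_zero]
  apply Finset.sum_congr rfl
  intro k _
  have hpow : derivative ℝ (g ^ (k + 1)) = (k + 1) • ((g ^ k) * derivative ℝ g) := by
    rw [Derivation.leibniz_pow]
    simp [smul_eq_mul]
  have hco : coeff (n + 1) (g ^ (k + 1)) * (↑n + 1) = (↑k + 1) * coeff n (g ^ k * derivative ℝ g) := by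
    have := coeff_derivative (g ^ (k + 1)) n
    rw [hpow] at this
    rw [map_nsmul, nsmul_eq_mul] at this
    push_cast at this
    linarith
  calc coeff (k + 1) f * coeff (n + 1) (g ^ (k + 1)) * (↑n + 1)
      = coeff (k + 1) f * (coeff (n + 1) (g ^ (k + 1)) * (↑n + 1)) := by ring
    _ = coeff (k + 1) f * ((↑k + 1) * coeff n (g ^ k * derivative ℝ g)) := by rw [hco]
    _ = coeff k (derivative ℝ f) * coeff n (g ^ k * derivative ℝ g) := by
        rw [coeff_derivative]; ring
    _ = _ := by rw [coeff_mul, Finset.mul_sum]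

lemma derivative_exp_eq : derivative ℝ (PowerSeries.exp ℝ) = PowerSeries.exp ℝ := by
  ext n
  rw [coeff_derivative, coeff_exp, coeff_exp]
  have h : ((n + 1).factorial : ℝ) = (n + 1) * n.factorial := by
    rw [Nat.factorial_succ]; push_cast; ring
  have h1 : (n.factorial : ℝ) ≠ 0 := by positivity
  have h2 : ((n : ℝ) + 1) ≠ 0 := by positivity
  simp only [map_div₀, map_one, map_natCast]
  rw [h]
  field_simp

lemma derivative_psExp {g : PowerSeries ℝ} (hg : constantCoeff g = 0) :
    derivative ℝ (psExp g) = psExp g * derivative ℝ g := by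
  rw [psExp, derivative_psComp hg, derivative_exp_eq]

/-- If `B` and `C` are formal power series with zero constant term, `B` also has zero
linear coefficient, and the block-decomposition equation `X·C' = X·exp(B' ∘ (X·C'))`
holds, then `C = D − D·(B' ∘ D) + (B ∘ D)` where `D = X·C'`. -/
theorem block_decomposition_identity (B C : PowerSeries ℝ)
    (hB0 : PowerSeries.constantCoeff B = 0)
    (hC0 : PowerSeries.constantCoeff C = 0)
    (hB1 : PowerSeries.coeff 1 B = 0)
    (heq : PowerSeries.X * (PowerSeries.derivative ℝ C) =
      PowerSeries.X *
        psExp (psComp (PowerSeries.derivative ℝ B)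
          (PowerSeries.X * PowerSeries.derivative ℝ C))) :
    C = PowerSeries.X * PowerSeries.derivative ℝ C
        - (PowerSeries.X * PowerSeries.derivative ℝ C) *
            psComp (PowerSeries.derivative ℝ B)
              (PowerSeries.X * PowerSeries.derivative ℝ C)
        + psComp B (PowerSeries.X * PowerSeries.derivative ℝ C) := by
  set D : PowerSeries ℝ := X * derivative ℝ C with hDdef
  set E : PowerSeries ℝ := psComp (derivative ℝ B) D with hEdef
  have hD0 : constantCoeff D = 0 := by
    rw [hDdef, map_mul, constantCoeff_X, zero_mul]
  have hE0 : constantCoeff E = 0 := by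
    rw [hEdef, constantCoeff_psComp, ← coeff_zero_eq_constantCoeff_apply,
      coeff_derivative, hB1, zero_mul]
  have hC' : derivative ℝ C = psExp E :=
    mul_left_cancel₀ X_ne_zero (by rw [← hDdef]; exact heq)
  have hD' : derivative ℝ D = derivative ℝ C + D * derivative ℝ E := by
    have h1 : derivative ℝ D = derivative ℝ C + X * derivative ℝ (derivative ℝ C) := by
      rw [hDdef, Derivation.leibniz, smul_eq_mul, smul_eq_mul, derivative_X, mul_one]
      ring
    rw [h1, hC', derivative_psExp hE0, heq]
    ring
  clear_value D E
  apply derivative.ext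
  · rw [map_add, map_sub, derivative_psComp hD0 B, ← hEdef, Derivation.leibniz,
      smul_eq_mul, smul_eq_mul, hD']
    ring
  · rw [hC0, map_add, map_sub, map_mul, hD0, constantCoeff_psComp, hB0]
    ring
end
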